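/- Let A be a unital C*-algebra and let k = (k_{ij}) be a 2×2 matrix over A which is an isometry of the form η = diag(1, -1) with itself, i.e., k*·η·k = η and k·η·k* = η, where k* is the conjugate-transpose. Then the diagonal entries k₁₁ and k₂₂ are invertible in A. (This is the key step in the uniqueness of the decomposition of a symmetric form into positive and negative parts: it follows from k₁₁k₁₁* = 1 + k₁₂k₁₂* and k₁₁*k₁₁ = 1 + k₁₂*k₁₂, which show k₁₁ has both a left and a right inverse.) -/

import Mathlib

lemma aux_one_add_star_mul_self_isUnit {A : Type*} [CStarAlgebra A] (x : A) :
    IsUnit (1 + star x * x) := by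
  letI := CStarAlgebra.spectralOrder A
  haveI := CStarAlgebra.spectralOrderedRing A
  exact CStarAlgebra.isUnit_of_le 1
    (le_add_of_nonneg_right (star_mul_self_nonneg x))

lemma aux_one_add_mul_star_self_isUnit {A : Type*} [CStarAlgebra A] (x : A) :
    IsUnit (1 + x * star x) := by
  letI := CStarAlgebra.spectralOrder A
  haveI := CStarAlgebra.spectralOrderedRing A
  exact CStarAlgebra.isUnit_of_le 1
    (le_add_of_nonneg_right (mul_star_self_nonneg x))

lemma aux_isUnit_of_mul_star {A : Type*} [Ring A] [StarRing A] {a : A}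
    (h1 : IsUnit (a * star a)) (h2 : IsUnit (star a * a)) : IsUnit a := by
  have hc : a * (star a * ↑h1.unit⁻¹) = 1 := by
    rw [← mul_assoc]; exact h1.mul_val_inv
  have hd : (↑h2.unit⁻¹ * star a) * a = 1 := by
    rw [mul_assoc]; exact h2.val_inv_mul
  have heq : (↑h2.unit⁻¹ * star a : A) = star a * ↑h1.unit⁻¹ := by
    calc (↑h2.unit⁻¹ * star a : A) = (↑h2.unit⁻¹ * star a) * (a * (star a * ↑h1.unit⁻¹)) := by
          rw [hc, mul_one]
      _ = ((↑h2.unit⁻¹ * star a) * a) * (star a * ↑h1.unit⁻¹) := by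
          simp only [mul_assoc]
      _ = star a * ↑h1.unit⁻¹ := by rw [hd, one_mul]
  exact isUnit_iff_exists.mpr ⟨_, hc, heq ▸ hd⟩

/-- If a `2×2` matrix `k` over a unital C*-algebra is an isometry of the form
`η = diag(1, -1)` with itself (`k* η k = η` and `k η k* = η`), then its diagonal
entries `k₁₁` and `k₂₂` are invertible. -/
theorem isometry_diag_entries_invertible (A : Type*) [CStarAlgebra A]
    (k : Matrix (Fin 2) (Fin 2) A)
    (h1 : k.conjTranspose * Matrix.diagonal ![1, -1] * k = Matrix.diagonal ![1, -1])
    (h2 : k * Matrix.diagonal ![1, -1] * k.conjTranspose = Matrix.diagonal ![1, -1]) :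
    IsUnit (k 0 0) ∧ IsUnit (k 1 1) := by
  have e1 := congrFun (congrFun h1 0) 0
  have e2 := congrFun (congrFun h2 0) 0
  have e3 := congrFun (congrFun h1 1) 1
  have e4 := congrFun (congrFun h2 1) 1
  simp only [Matrix.mul_apply, Fin.sum_univ_two, Matrix.conjTranspose_apply,
    Matrix.diagonal_apply, Matrix.cons_val_zero, Matrix.cons_val_one, Matrix.head_cons,
    if_pos rfl, Fin.zero_eq_one_iff, Fin.one_eq_zero_iff, if_neg, mul_one, mul_neg, one_mul,
    neg_mul, OfNat.ofNat_ne_one, not_false_eq_true, ite_true, ite_false] at e1 e2 e3 e4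
  -- e1 : star (k 0 0) * k 0 0 - star (k 1 0) * k 1 0 = 1 (roughly)
  constructor
  · apply aux_isUnit_of_mul_star
    · have : k 0 0 * star (k 0 0) = 1 + k 0 1 * star (k 0 1) := by linear_combination (norm := noncomm_ring) e2
      rw [this]; exact aux_one_add_mul_star_self_isUnit _
    · have : star (k 0 0) * k 0 0 = 1 + star (k 1 0) * k 1 0 := by linear_combination (norm := noncomm_ring) e1
      rw [this]; exact aux_one_add_star_mul_self_isUnit _
  · apply aux_isUnit_of_mul_star
    · have : k 1 1 * star (k 1 1) = 1 + k 1 0 * star (k 1 0) := by linear_combination (norm := noncomm_ring) -e4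
      rw [this]; exact aux_one_add_mul_star_self_isUnit _
    · have : star (k 1 1) * k 1 1 = 1 + star (k 0 1) * k 0 1 := by linear_combination (norm := noncomm_ring) -e3
      rw [this]; exact aux_one_add_star_mul_self_isUnit _
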